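/- arXiv:1909.12670 — 3 statements merged into one kernel-verified Lean document; each statement's English description precedes it below -/
import Mathlib

section
/- Let η > 0 be fixed and let n ∈ ℕ with 0 < 1/n ≪ η ≪ 1 (i.e. η is sufficiently small and n is sufficiently large as a function of η). Let B be the r-partite bottle graph with neck σ and width ω (σ, ω ∈ ℕ, σ < ω), let b := |B| = σ + (r−1)ω, and assume b divides n (and that the quantities ηn and ωn/b appearing below are integers). Then for any integer k with 1 ≤ k < ωn/b − (rb + 1)ηn, there exists a graph G on n vertices whose degree sequence d₁ ≤ … ≤ d_n satisfies d_i ≥ (1 − (ω + σ)/b)·n + (σ/ω)·i + ηn for all i ∈ {1, …, k−1} ∪ {k + rbηn + 1, …, ωn/b}, and d_i = (1 − (ω + σ)/b)·n + ⌈(σ/ω)·k⌉ + ηn for all k ≤ i ≤ k + rbηn, but such that G does not contain a B-tiling covering all but at most ηn vertices. -/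
open SimpleGraph

/-- The degree of a vertex, as the cardinality of its neighbour set. -/
noncomputable def degN {V : Type*} (G : SimpleGraph V) (v : V) : ℕ :=
  (G.neighborSet v).ncard

/-- `f` is a copy of `H` in `G`: an injective map preserving adjacency. -/
def IsCopy {α β : Type*} (H : SimpleGraph α) (G : SimpleGraph β) (f : α → β) : Prop :=
  Function.Injective f ∧ ∀ ⦃u v : α⦄, H.Adj u v → G.Adj (f u) (f v)

/-- An `H`-tiling in `G`: a collection of vertex-disjoint copies of `H` in `G`. -/
def IsTiling {α β : Type*} (H : SimpleGraph α) (G : SimpleGraph β) (T : Set (α → β)) : Prop :=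
  (∀ f ∈ T, IsCopy H G f) ∧
    T.Pairwise fun f g => Disjoint (Set.range f) (Set.range g)

/-- `G` contains a perfect `H`-tiling. -/
def HasPerfectTiling {α β : Type*} (H : SimpleGraph α) (G : SimpleGraph β) : Prop :=
  ∃ T : Set (α → β), IsTiling H G T ∧ ∀ v : β, ∃ f ∈ T, v ∈ Set.range f

/-- `σ(H)` relative to `r` colours: the smallest possible size of a colour class in
any proper colouring of `H` with `r` colours. -/
noncomputable def minClassSize {α : Type*} (H : SimpleGraph α) (r : ℕ) : ℕ :=
  sInf {s : ℕ | ∃ (c : H.Coloring (Fin r)) (i : Fin r), s = {v | c v = i}.ncard}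

/-- `hcf_χ(H) = 1`: the highest common factor of all differences of colour class sizes
over optimal colourings is 1 (equivalently, no `d ≥ 2` divides all such differences). -/
def HcfChiOne {α : Type*} (H : SimpleGraph α) (r : ℕ) : Prop :=
  ∀ d : ℕ, 2 ≤ d →
    ¬ ∀ (c : H.Coloring (Fin r)) (i j : Fin r),
        (d : ℤ) ∣ (({v | c v = i}.ncard : ℤ) - ({v | c v = j}.ncard : ℤ))

/-- `hcf_χ(H) ≤ 2`: some difference of colour class sizes is nonzero (so `hcf_χ(H) ≠ ∞`)
and no `d ≥ 3` divides all such differences. -/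
def HcfChiLeTwo {α : Type*} (H : SimpleGraph α) (r : ℕ) : Prop :=
  (∃ (c : H.Coloring (Fin r)) (i j : Fin r),
      {v | c v = i}.ncard ≠ {v | c v = j}.ncard) ∧
    ∀ d : ℕ, 3 ≤ d →
      ¬ ∀ (c : H.Coloring (Fin r)) (i j : Fin r),
          (d : ℤ) ∣ (({v | c v = i}.ncard : ℤ) - ({v | c v = j}.ncard : ℤ))

/-- `hcf_c(H) = 1`: the highest common factor of the orders of the components of `H` is 1. -/
def HcfCompOne {α : Type*} (H : SimpleGraph α) : Prop :=
  ∀ d : ℕ, 2 ≤ d → ∃ C : H.ConnectedComponent, ¬ d ∣ C.supp.ncard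

/-- `hcf(H) = 1` for a graph `H` with `χ(H) = r`. -/
def HcfOne {α : Type*} (H : SimpleGraph α) (r : ℕ) : Prop :=
  (r = 2 → HcfCompOne H ∧ HcfChiLeTwo H 2) ∧ (r ≠ 2 → HcfChiOne H r)


/-- `G` contains an `H`-tiling covering all but at most `m` vertices. -/
def HasTilingAllBut {α β : Type*} (H : SimpleGraph α) (G : SimpleGraph β) (m : ℕ) : Prop :=
  ∃ T : Set (α → β), IsTiling H G T ∧ {v : β | ∀ f ∈ T, v ∉ Set.range f}.ncard ≤ m

/-- The `r`-partite bottle graph with neck `σ` and width `ω`: the complete `r`-partite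
graph with one vertex class of size `σ` and `r - 1` classes of size `ω`. -/
abbrev bottleGraph (r σ ω : ℕ) : SimpleGraph (Σ i : Fin r, Fin (if (i : ℕ) = 0 then σ else ω)) :=
  completeMultipartiteGraph fun i : Fin r => Fin (if (i : ℕ) = 0 then σ else ω)


open SimpleGraph

private lemma nat_lt_div_succ (a c : ℕ) (hc : 0 < c) : a < (a / c + 1) * c := by
  have h1 := Nat.div_add_mod a c
  have h2 : a % c < c := Nat.mod_lt _ hc
  have h3 : (a / c + 1) * c = c * (a / c) + c := by ring
  omega

private lemma ceil_div_bounds (a c : ℕ) (hc : 0 < c) :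
    a ≤ c * ((a + c - 1) / c) ∧ c * ((a + c - 1) / c) < a + c := by
  have h1 := Nat.div_add_mod (a + c - 1) c
  have h2 : (a + c - 1) % c < c := Nat.mod_lt _ hc
  omega

private lemma card_filter_interval {n : ℕ} (a b : ℕ) (hbn : b ≤ n) :
    (Finset.univ.filter (fun w : Fin n => a ≤ (w : ℕ) ∧ (w : ℕ) < b)).card = b - a := by
  have h : ∀ m ∈ Finset.Ico a b, m < n := fun m hm =>
    lt_of_lt_of_le (Finset.mem_Ico.mp hm).2 hbn
  have he : (Finset.univ.filter (fun w : Fin n => a ≤ (w : ℕ) ∧ (w : ℕ) < b))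
      = (Finset.Ico a b).attachFin h := by
    ext w
    simp [Finset.mem_attachFin, Finset.mem_Ico]
  rw [he, Finset.card_attachFin, Nat.card_Ico]

private lemma ncard_interval {n : ℕ} (a b : ℕ) (hbn : b ≤ n) :
    ({w : Fin n | a ≤ (w : ℕ) ∧ (w : ℕ) < b} : Set (Fin n)).ncard = b - a := by
  classical
  have he : ({w : Fin n | a ≤ (w : ℕ) ∧ (w : ℕ) < b} : Set (Fin n))
      = ↑(Finset.univ.filter (fun w : Fin n => a ≤ (w : ℕ) ∧ (w : ℕ) < b)) := by
    ext w; simp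
  rw [he, Set.ncard_coe_finset, card_filter_interval a b hbn]

private lemma sigma_fin_ext {r σ ω : ℕ} {u v : Σ i : Fin r, Fin (if (i : ℕ) = 0 then σ else ω)}
    (h1 : u.1 = v.1) (h2 : (u.2 : ℕ) = (v.2 : ℕ)) : u = v := by
  rcases u with ⟨i, x⟩
  rcases v with ⟨j, y⟩
  dsimp at h1 h2
  subst h1
  exact congrArg (Sigma.mk i) (Fin.ext h2)

private def badPair (m1 B2 B4 cw x y : ℕ) : Prop :=
  (x < m1 ∧ y < m1) ∨ (x < m1 ∧ B2 ≤ y ∧ y < B4) ∨ (B2 ≤ x ∧ x < B4 ∧ y < m1) ∨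
    (m1 ≤ x ∧ x < B2 ∧ m1 ≤ y ∧ y < B2 ∧ (x - m1) / cw = (y - m1) / cw)

private lemma badPair_symm {m1 B2 B4 cw x y : ℕ} (h : badPair m1 B2 B4 cw x y) :
    badPair m1 B2 B4 cw y x := by
  rcases h with ⟨h1, h2⟩ | ⟨h1, h2, h3⟩ | ⟨h1, h2, h3⟩ | ⟨h1, h2, h3, h4, h5⟩
  · exact Or.inl ⟨h2, h1⟩
  · exact Or.inr (Or.inr (Or.inl ⟨h2, h3, h1⟩))
  · exact Or.inr (Or.inl ⟨h3, h1, h2⟩)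
  · exact Or.inr (Or.inr (Or.inr ⟨h3, h4, h1, h2, h5.symm⟩))

private def myG (n m1 B2 B4 cw : ℕ) : SimpleGraph (Fin n) where
  Adj v w := v ≠ w ∧ ¬ badPair m1 B2 B4 cw (v : ℕ) (w : ℕ)
  symm := by
    constructor
    intro v w ⟨h1, h2⟩
    exact ⟨h1.symm, fun hb => h2 (badPair_symm hb)⟩
  loopless := by constructor; intro v ⟨h1, _⟩; exact h1 rfl

private lemma myG_adj {n m1 B2 B4 cw : ℕ} (v w : Fin n) :
    (myG n m1 B2 B4 cw).Adj v w ↔ v ≠ w ∧ ¬ badPair m1 B2 B4 cw (v : ℕ) (w : ℕ) := Iff.rfl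

private lemma adj_L {n m1 B2 B4 cw : ℕ} (v w : Fin n) (hv : (v : ℕ) < m1)
    (hm2 : m1 ≤ B2) (h24 : B2 ≤ B4) :
    (myG n m1 B2 B4 cw).Adj v w ↔ ((m1 ≤ (w : ℕ) ∧ (w : ℕ) < B2) ∨ B4 ≤ (w : ℕ)) := by
  constructor
  · rintro ⟨hne, hnb⟩
    rcases Nat.lt_or_ge (w : ℕ) m1 with h | h
    · exact absurd (Or.inl ⟨hv, h⟩) hnb
    rcases Nat.lt_or_ge (w : ℕ) B2 with h2 | h2
    · exact Or.inl ⟨h, h2⟩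
    rcases Nat.lt_or_ge (w : ℕ) B4 with h3 | h3
    · exact absurd (Or.inr (Or.inl ⟨hv, h2, h3⟩)) hnb
    · exact Or.inr h3
  · intro hw
    refine ⟨fun he => by rw [he] at hv; omega, ?_⟩
    rintro (⟨h1, h2⟩ | ⟨h1, h2, h3⟩ | ⟨h1, h2, h3⟩ | ⟨h1, h2, h3, h4, h5⟩) <;> omega

private lemma adj_C {n m1 B2 B4 cw q : ℕ} (v w : Fin n) (hv1 : m1 ≤ (v : ℕ))
    (hv2 : (v : ℕ) < B2) (hcw : 0 < cw) (hB2 : B2 = m1 + q * cw) :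
    (myG n m1 B2 B4 cw).Adj v w ↔
      ¬ (m1 + ((v : ℕ) - m1) / cw * cw ≤ (w : ℕ) ∧
          (w : ℕ) < m1 + (((v : ℕ) - m1) / cw + 1) * cw) := by
  have hvlo : ((v : ℕ) - m1) / cw * cw ≤ (v : ℕ) - m1 := Nat.div_mul_le_self _ _
  have hvhi : (v : ℕ) - m1 < (((v : ℕ) - m1) / cw + 1) * cw := nat_lt_div_succ _ _ hcw
  have hjq : ((v : ℕ) - m1) / cw < q := (Nat.div_lt_iff_lt_mul hcw).2 (by omega)
  have hj1 : (((v : ℕ) - m1) / cw + 1) * cw ≤ q * cw := Nat.mul_le_mul_right _ (by omega)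
  constructor
  · rintro ⟨hne, hnb⟩ ⟨hw1, hw2⟩
    apply hnb
    refine Or.inr (Or.inr (Or.inr ⟨hv1, hv2, by omega, by omega, ?_⟩))
    exact (Nat.div_eq_of_lt_le (by omega) (by omega)).symm
  · intro hni
    refine ⟨fun he => hni (by rw [← he]; omega), ?_⟩
    rintro (⟨h1, h2⟩ | ⟨h1, h2, h3⟩ | ⟨h1, h2, h3⟩ | ⟨h1, h2, h3, h4, h5⟩)
    · omega
    · omega
    · omega
    · apply hni
      have hwlo : ((w : ℕ) - m1) / cw * cw ≤ (w : ℕ) - m1 := Nat.div_mul_le_self _ _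
      have hwhi : (w : ℕ) - m1 < (((w : ℕ) - m1) / cw + 1) * cw := nat_lt_div_succ _ _ hcw
      rw [h5]
      omega

private lemma adj_MA {n m1 B2 B4 cw : ℕ} (v w : Fin n) (hv1 : B2 ≤ (v : ℕ))
    (hv2 : (v : ℕ) < B4) (hm2 : m1 ≤ B2) :
    (myG n m1 B2 B4 cw).Adj v w ↔ (m1 ≤ (w : ℕ) ∧ w ≠ v) := by
  constructor
  · rintro ⟨hne, hnb⟩
    refine ⟨?_, hne.symm⟩
    by_contra h
    exact hnb (Or.inr (Or.inr (Or.inl ⟨hv1, hv2, by omega⟩)))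
  · rintro ⟨hw, hne⟩
    refine ⟨hne.symm, ?_⟩
    rintro (⟨h1, h2⟩ | ⟨h1, h2, h3⟩ | ⟨h1, h2, h3⟩ | ⟨h1, h2, h3, h4, h5⟩) <;> omega

private lemma adj_P {n m1 B2 B4 cw : ℕ} (v w : Fin n) (hv : B4 ≤ (v : ℕ))
    (hm2 : m1 ≤ B2) (h24 : B2 ≤ B4) :
    (myG n m1 B2 B4 cw).Adj v w ↔ w ≠ v := by
  constructor
  · rintro ⟨hne, _⟩; exact hne.symm
  · intro hne
    refine ⟨hne.symm, ?_⟩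
    rintro (⟨h1, h2⟩ | ⟨h1, h2, h3⟩ | ⟨h1, h2, h3⟩ | ⟨h1, h2, h3, h4, h5⟩) <;> omega

private lemma bottle_adj {r σ ω : ℕ} (u v : Σ i : Fin r, Fin (if (i : ℕ) = 0 then σ else ω)) :
    (completeMultipartiteGraph fun i : Fin r => Fin (if (i : ℕ) = 0 then σ else ω)).Adj u v ↔
      u.1 ≠ v.1 := by simp

private lemma card_bottle (q σ ω : ℕ) :
    Fintype.card (Σ i : Fin (q + 2), Fin (if (i : ℕ) = 0 then σ else ω)) = σ + (q + 1) * ω := by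
  classical
  rw [Fintype.card_sigma]
  simp only [Fintype.card_fin]
  rw [Fin.sum_univ_succ]
  simp [Finset.sum_const, Finset.card_univ, mul_comm]

private lemma sigma_snd_lt {r σ ω : ℕ} (hσω : σ ≤ ω)
    (u : Σ i : Fin r, Fin (if (i : ℕ) = 0 then σ else ω)) : (u.2 : ℕ) < ω := by
  have h2 := u.2.isLt
  have h3 : (if (u.1 : ℕ) = 0 then σ else ω) ≤ ω := by split <;> omega
  omega

private lemma copy_preimage_card_le {β : Type*} [Fintype β] [DecidableEq β] {r σ ω : ℕ}
    (hσω : σ ≤ ω) {G : SimpleGraph β} {f : (Σ i : Fin r, Fin (if (i : ℕ) = 0 then σ else ω)) → β}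
    (hf : ∀ ⦃u v⦄, (completeMultipartiteGraph
        fun i : Fin r => Fin (if (i : ℕ) = 0 then σ else ω)).Adj u v → G.Adj (f u) (f v))
    (S : Finset β) (hS : ∀ x ∈ S, ∀ y ∈ S, ¬ G.Adj x y)
    [DecidablePred fun u : (Σ i : Fin r, Fin (if (i : ℕ) = 0 then σ else ω)) => f u ∈ S] :
    (Finset.univ.filter (fun u => f u ∈ S)).card ≤ ω := by
  classical
  rcases Finset.eq_empty_or_nonempty (Finset.univ.filter (fun u => f u ∈ S)) with he | ⟨u₀, hu₀⟩
  · rw [he]; simp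
  have hu₀S : f u₀ ∈ S := (Finset.mem_filter.mp hu₀).2
  have hsame : ∀ u ∈ Finset.univ.filter (fun u => f u ∈ S), u.1 = u₀.1 := by
    intro u hu
    by_contra hne
    have hadj : (completeMultipartiteGraph
        fun i : Fin r => Fin (if (i : ℕ) = 0 then σ else ω)).Adj u u₀ := (bottle_adj u u₀).2 hne
    exact hS _ (Finset.mem_filter.mp hu).2 _ hu₀S (hf hadj)
  have hmaps : ∀ u ∈ Finset.univ.filter (fun u => f u ∈ S),
      ((u.2 : ℕ)) ∈ Finset.range ω := by
    intro u _
    rw [Finset.mem_range]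
    exact sigma_snd_lt hσω u
  have hinj : Set.InjOn (fun u : (Σ i : Fin r, Fin (if (i : ℕ) = 0 then σ else ω)) => (u.2 : ℕ))
      ↑(Finset.univ.filter (fun u => f u ∈ S)) := by
    intro u hu v hv hval
    exact sigma_fin_ext ((hsame u (Finset.mem_coe.mp hu)).trans
      (hsame v (Finset.mem_coe.mp hv)).symm) hval
  have := Finset.card_le_card_of_injOn _ hmaps hinj
  simpa [Finset.card_range] using this

private lemma fiber_card_le {r σ ω : ℕ} (hσω : σ ≤ ω) (i₀ : Fin r) :
    (Finset.univ.filter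
      (fun u : (Σ i : Fin r, Fin (if (i : ℕ) = 0 then σ else ω)) => u.1 = i₀)).card ≤ ω := by
  classical
  have hmaps : ∀ u ∈ Finset.univ.filter
      (fun u : (Σ i : Fin r, Fin (if (i : ℕ) = 0 then σ else ω)) => u.1 = i₀),
      ((u.2 : ℕ)) ∈ Finset.range ω := by
    intro u _
    rw [Finset.mem_range]
    exact sigma_snd_lt hσω u
  have hinj : Set.InjOn (fun u : (Σ i : Fin r, Fin (if (i : ℕ) = 0 then σ else ω)) => (u.2 : ℕ))
      ↑(Finset.univ.filter
        (fun u : (Σ i : Fin r, Fin (if (i : ℕ) = 0 then σ else ω)) => u.1 = i₀)) := by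
    intro u hu v hv hval
    have h1 : u.1 = i₀ := (Finset.mem_filter.mp (Finset.mem_coe.mp hu)).2
    have h2 : v.1 = i₀ := (Finset.mem_filter.mp (Finset.mem_coe.mp hv)).2
    exact sigma_fin_ext (h1.trans h2.symm) hval
  have := Finset.card_le_card_of_injOn _ hmaps hinj
  simpa [Finset.card_range] using this
/-- Proposition 2.3: the slope of the degree sequence condition
is best possible for bottle graphs.  Here `b = |B| = σ + (r-1)ω`, `E = ηn` and
`W = ωn/b` (both integers by assumption). -/
theorem extremal_example_bottle
    (r σ ω : ℕ) (hr : 2 ≤ r) (hσ : 0 < σ) (hσω : σ < ω) :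
    ∃ η₀ : ℝ, 0 < η₀ ∧ ∀ η : ℝ, 0 < η → η ≤ η₀ →
      ∃ n₀ : ℕ, ∀ n : ℕ, n₀ ≤ n → (σ + (r - 1) * ω) ∣ n →
        ∀ E : ℕ, (E : ℝ) = η * n →
          ∀ k : ℕ, 1 ≤ k →
            k + (r * (σ + (r - 1) * ω) + 1) * E < ω * (n / (σ + (r - 1) * ω)) →
            ∃ G : SimpleGraph (Fin n),
              (∃ e : Fin n ≃ Fin n,
                (∀ i j : Fin n, i ≤ j → degN G (e i) ≤ degN G (e j)) ∧
                (∀ i : Fin n,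
                  (((i : ℕ) + 1 < k) ∨
                    (k + r * (σ + (r - 1) * ω) * E < (i : ℕ) + 1 ∧
                      (i : ℕ) + 1 ≤ ω * (n / (σ + (r - 1) * ω)))) →
                  (1 - ((ω : ℝ) + σ) / (σ + (r - 1) * ω)) * n
                      + ((σ : ℝ) / ω) * ((i : ℕ) + 1) + η * n ≤ (degN G (e i) : ℝ)) ∧
                (∀ i : Fin n, k ≤ (i : ℕ) + 1 →
                  (i : ℕ) + 1 ≤ k + r * (σ + (r - 1) * ω) * E →
                  (degN G (e i) : ℝ) =
                    (1 - ((ω : ℝ) + σ) / (σ + (r - 1) * ω)) * n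
                      + ((⌈(σ : ℝ) * k / ω⌉ : ℤ) : ℝ) + η * n)) ∧
              ¬ HasTilingAllBut (bottleGraph r σ ω) G E := by
  
  classical
  refine ⟨1, one_pos, fun η hη hη1 => ⟨1, fun n hn hdvd E hE k hk1 hkW => ?_⟩⟩
  obtain ⟨q, rfl⟩ : ∃ q, r = q + 2 := ⟨r - 2, by omega⟩
  have e1 : q + 2 - 1 = q + 1 := by omega
  simp only [e1] at hdvd hkW ⊢
  set b := σ + (q + 1) * ω with hbdef
  set N := n / b with hNdef
  set W := ω * N with hWdef
  set m1 := k + (q + 2) * b * E with hm1def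
  set cl := (σ * k + ω - 1) / ω with hcldef
  set cw := W - E with hcwdef
  set p := cl + (q + 1) * E with hpdef
  set B2 := m1 + q * cw with hB2def
  set B4 := B2 + ((W - m1) + ((σ * N + q * E) - p)) with hB4def
  clear_value b
  clear_value N
  clear_value W
  clear_value m1
  clear_value cl
  clear_value cw
  clear_value p
  clear_value B2
  clear_value B4
  have hω : 0 < ω := by omega
  have hq1ω : ω ≤ (q + 1) * ω := Nat.le_mul_of_pos_left ω (by omega)
  have hb0 : 0 < b := by omega
  have hbω : ω + 1 ≤ b := by omega
  have hnbN : n = b * N := by rw [hNdef]; exact (Nat.mul_div_cancel' hdvd).symm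
  have hE1 : 1 ≤ E := by
    rcases Nat.eq_zero_or_pos E with h | h
    · exfalso
      rw [h] at hE
      have hn1 : (1 : ℝ) ≤ n := by exact_mod_cast hn
      have hpos : (0 : ℝ) < η * n := by positivity
      push_cast at hE
      linarith
    · exact h
  have hkW2 : k + ((q + 2) * b * E + E) < W := by
    have he : ((q + 2) * b + 1) * E = (q + 2) * b * E + E := by ring
    omega
  obtain ⟨hcb1, hcb2⟩ : σ * k ≤ ω * cl ∧ ω * cl < σ * k + ω := by
    rw [hcldef]; exact ceil_div_bounds (σ * k) ω hω
  have hEW : E < W := by omega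
  have hcwE : cw + E = W := by omega
  have hm1cw : m1 + 1 ≤ cw := by omega
  have hcw0 : 0 < cw := by omega
  have hσW : σ * W = ω * (σ * N) := by rw [hWdef]; ring
  have hclE : cl + E ≤ σ * N := by
    have h1 : σ * (k + ((q + 2) * b * E + E + 1)) ≤ σ * W := Nat.mul_le_mul_left σ (by omega)
    have h2 : σ * (k + ((q + 2) * b * E + E + 1))
        = σ * k + σ * ((q + 2) * (b * E)) + σ * E + σ := by ring
    have h2' : (q + 2) * b * E = (q + 2) * (b * E) := by ring
    have h3 : (q + 2) * (b * E) = q * (b * E) + 2 * (b * E) := by ring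
    have h4 : (q + 2) * (b * E) ≤ σ * ((q + 2) * (b * E)) := Nat.le_mul_of_pos_left _ hσ
    have h5 : (ω + 1) * E ≤ b * E := Nat.mul_le_mul_right E hbω
    have h6 : (ω + 1) * E = ω * E + E := by ring
    have h7 : ω ≤ ω * E := by
      have := Nat.mul_le_mul_left ω hE1
      simpa using this
    have h8 : ω * (cl + E) = ω * cl + ω * E := by ring
    refine Nat.le_of_mul_le_mul_left ?_ hω
    omega
  have hn2 : n = σ * N + (q + 1) * W := by rw [hnbN, hbdef, hWdef]; ring
  have hq1E : (q + 1) * E = q * E + E := by ring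
  have hq1W : (q + 1) * W = q * W + W := by ring
  have hqcwW : q * cw + q * E = q * W := by rw [← hcwE]; ring
  have hpa : p ≤ σ * N + q * E := by omega
  have hB4p : B4 + p = n := by omega
  have hm2 : m1 ≤ B2 := by omega
  have h24 : B2 ≤ B4 := by omega
  have h4n : B4 ≤ n := by omega
  have hWn : W ≤ n := by omega
  have hWB4 : W ≤ B4 := by omega
  have hB2n : B2 ≤ n := by omega
  have hm1n : m1 ≤ n := by omega
  set G := myG n m1 B2 B4 cw with hGdef
  clear_value G
  -- degrees
  have hdegL : ∀ v : Fin n, (v : ℕ) < m1 → degN G v = q * cw + p := by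
    intro v hv
    rw [hGdef]
    unfold degN
    have hdisjCP : Disjoint {w : Fin n | m1 ≤ (w : ℕ) ∧ (w : ℕ) < B2}
        {w : Fin n | B4 ≤ (w : ℕ) ∧ (w : ℕ) < n} := by
      rw [Set.disjoint_left]
      rintro w ⟨_, h2⟩ ⟨h3, _⟩
      omega
    have hset : (myG n m1 B2 B4 cw).neighborSet v =
        {w : Fin n | m1 ≤ (w : ℕ) ∧ (w : ℕ) < B2} ∪ {w : Fin n | B4 ≤ (w : ℕ) ∧ (w : ℕ) < n} := by
      ext w
      rw [SimpleGraph.mem_neighborSet, adj_L v w hv hm2 h24]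
      simp only [Set.mem_union, Set.mem_setOf_eq]
      have := w.isLt
      omega
    rw [hset, Set.ncard_union_eq hdisjCP (Set.toFinite _) (Set.toFinite _),
      ncard_interval m1 B2 hB2n, ncard_interval B4 n le_rfl]
    omega
  have hdegC : ∀ v : Fin n, m1 ≤ (v : ℕ) → (v : ℕ) < B2 → degN G v = n - cw := by
    intro v hv1 hv2
    rw [hGdef]
    unfold degN
    have hjq : ((v : ℕ) - m1) / cw < q := (Nat.div_lt_iff_lt_mul hcw0).2 (by omega)
    have hj1 : (((v : ℕ) - m1) / cw + 1) * cw ≤ q * cw := Nat.mul_le_mul_right _ (by omega)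
    have hset : (myG n m1 B2 B4 cw).neighborSet v =
        Set.univ \ {w : Fin n | m1 + ((v : ℕ) - m1) / cw * cw ≤ (w : ℕ) ∧
          (w : ℕ) < m1 + (((v : ℕ) - m1) / cw + 1) * cw} := by
      ext w
      rw [SimpleGraph.mem_neighborSet, adj_C v w hv1 hv2 hcw0 hB2def]
      simp [Set.mem_diff, Set.mem_setOf_eq]
    rw [hset, Set.ncard_diff (Set.subset_univ _), Set.ncard_univ,
      ncard_interval _ _ (by omega : m1 + (((v : ℕ) - m1) / cw + 1) * cw ≤ n)]
    have hcard : Nat.card (Fin n) = n := by simp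
    have hsplit : (((v : ℕ) - m1) / cw + 1) * cw = ((v : ℕ) - m1) / cw * cw + cw := by ring
    omega
  have hdegMA : ∀ v : Fin n, B2 ≤ (v : ℕ) → (v : ℕ) < B4 → degN G v = n - m1 - 1 := by
    intro v hv1 hv2
    rw [hGdef]
    unfold degN
    have hset : (myG n m1 B2 B4 cw).neighborSet v =
        {w : Fin n | m1 ≤ (w : ℕ) ∧ (w : ℕ) < n} \ {v} := by
      ext w
      rw [SimpleGraph.mem_neighborSet, adj_MA v w hv1 hv2 hm2]
      simp only [Set.mem_diff, Set.mem_setOf_eq, Set.mem_singleton_iff]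
      constructor
      · rintro ⟨h1, h2⟩; exact ⟨⟨h1, w.isLt⟩, h2⟩
      · rintro ⟨⟨h1, _⟩, h2⟩; exact ⟨h1, h2⟩
    rw [hset, Set.ncard_diff_singleton_of_mem (by exact ⟨by omega, v.isLt⟩),
      ncard_interval m1 n le_rfl]
  have hdegP : ∀ v : Fin n, B4 ≤ (v : ℕ) → degN G v = n - 1 := by
    intro v hv
    rw [hGdef]
    unfold degN
    have hset : (myG n m1 B2 B4 cw).neighborSet v =
        {w : Fin n | 0 ≤ (w : ℕ) ∧ (w : ℕ) < n} \ {v} := by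
      ext w
      rw [SimpleGraph.mem_neighborSet, adj_P v w hv hm2 h24]
      simp only [Set.mem_diff, Set.mem_setOf_eq, Set.mem_singleton_iff]
      constructor
      · intro h2; exact ⟨⟨Nat.zero_le _, w.isLt⟩, h2⟩
      · rintro ⟨_, h2⟩; exact h2
    rw [hset, Set.ncard_diff_singleton_of_mem (by exact ⟨Nat.zero_le _, v.isLt⟩),
      ncard_interval 0 n le_rfl]
    omega
  have hdeg : ∀ v : Fin n, degN G v =
      if (v : ℕ) < m1 then q * cw + p
      else if (v : ℕ) < B2 then n - cw
      else if (v : ℕ) < B4 then n - m1 - 1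
      else n - 1 := by
    intro v
    split_ifs with h1 h2 h3
    · exact hdegL v h1
    · exact hdegC v (by omega) h2
    · exact hdegMA v (by omega) h3
    · exact hdegP v (by omega)
  -- real-number preliminaries
  have hωR : (0 : ℝ) < ω := by exact_mod_cast hω
  have hbcast : ((σ : ℝ) + (((q + 2 : ℕ) : ℝ) - 1) * (ω : ℝ)) = (b : ℝ) := by
    rw [hbdef]; push_cast; ring
  have halpha : (1 - ((ω : ℝ) + σ) / (b : ℝ)) * n = (q : ℝ) * W := by
    have hb0R : (0 : ℝ) < b := by exact_mod_cast hb0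
    have h1 : ((n : ℕ) : ℝ) = b * N := by exact_mod_cast hnbN
    have h2 : ((W : ℕ) : ℝ) = ω * N := by exact_mod_cast hWdef
    have h3 : ((b : ℕ) : ℝ) = σ + (q + 1) * ω := by rw [hbdef]; push_cast; ring
    rw [h1, h2]
    field_simp
    rw [h3]
    ring
  have hvalLR : ((q * cw + p : ℕ) : ℝ) = (q : ℝ) * W + cl + E := by
    have h1 : q * cw + p = q * W + cl + E := by omega
    rw [h1]; push_cast; ring
  
  refine ⟨G, ⟨Equiv.refl _, ?_, ?_, ?_⟩, ?_⟩
  · -- monotone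
    intro i j hij
    simp only [Equiv.refl_apply]
    rw [hdeg i, hdeg j]
    have hij' : (i : ℕ) ≤ (j : ℕ) := hij
    have hord1 : q * cw + p + cw ≤ n := by omega
    split_ifs <;> omega
  · -- lower bounds
    intro i hi
    simp only [Equiv.refl_apply]
    rcases hi with hi | ⟨hi1, hi2⟩
    · have hiv : (i : ℕ) < m1 := by omega
      rw [hdeg i, if_pos hiv, hbcast, halpha, hvalLR, ← hE]
      have hσi : (σ : ℝ) * ((i : ℕ) + 1) ≤ (ω : ℝ) * cl := by
        have h1 : σ * ((i : ℕ) + 1) ≤ ω * cl :=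
          le_trans (Nat.mul_le_mul_left σ (by omega : (i : ℕ) + 1 ≤ k)) hcb1
        exact_mod_cast h1
      have hfrac : (σ : ℝ) / ω * ((i : ℕ) + 1) ≤ cl := by
        rw [div_mul_eq_mul_div, div_le_iff₀ hωR]
        exact le_trans hσi (le_of_eq (mul_comm _ _))
      linarith
    · have hge : (n - W + E : ℕ) ≤ degN G i := by
        rw [hdeg i]
        have hiv1 : m1 ≤ (i : ℕ) := by omega
        split_ifs <;> omega
      refine le_trans ?_ ((Nat.cast_le (α := ℝ)).mpr hge)
      rw [hbcast, halpha, ← hE]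
      have hcast : ((n - W + E : ℕ) : ℝ) = (n : ℝ) - W + E := by
        rw [Nat.cast_add, Nat.cast_sub hWn]
      rw [hcast]
      have hσi2 : (σ : ℝ) * ((i : ℕ) + 1) ≤ (ω : ℝ) * (σ * N) := by
        have h1 : σ * ((i : ℕ) + 1) ≤ ω * (σ * N) := by
          refine le_trans (Nat.mul_le_mul_left σ (by omega : (i : ℕ) + 1 ≤ W)) ?_
          omega
        exact_mod_cast h1
      have hfrac : (σ : ℝ) / ω * ((i : ℕ) + 1) ≤ (σ : ℝ) * N := by
        rw [div_mul_eq_mul_div, div_le_iff₀ hωR]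
        refine le_trans hσi2 (le_of_eq ?_)
        ring
      have hnreal : (n : ℝ) = σ * N + (q + 1) * W := by exact_mod_cast hn2
      linarith
  · -- equality on the flat portion
    intro i hi1 hi2
    have hiv : (i : ℕ) < m1 := by omega
    simp only [Equiv.refl_apply]
    rw [hdeg i, if_pos hiv, hbcast, halpha, ← hE]
    have hceilR : (⌈(σ : ℝ) * k / ω⌉ : ℤ) = (cl : ℤ) := by
      rw [Int.ceil_eq_iff]
      have hc1 : ((σ * k : ℕ) : ℝ) ≤ ((ω * cl : ℕ) : ℝ) := by exact_mod_cast hcb1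
      have hc2 : ((ω * cl : ℕ) : ℝ) < ((σ * k : ℕ) : ℝ) + ω := by exact_mod_cast hcb2
      push_cast at hc1 hc2
      constructor
      · rw [lt_div_iff₀ hωR]
        push_cast
        have hb1 : ((cl : ℝ) - 1) * ω = ω * cl - ω := by ring
        linarith
      · rw [div_le_iff₀ hωR]
        push_cast
        have hb2 : (cl : ℝ) * ω = ω * cl := by ring
        linarith
    rw [hceilR, hvalLR]
    push_cast
    ring
  · -- no near-perfect tiling
    intro hTile
    obtain ⟨T, ⟨hcopies, hdisj⟩, hunc⟩ := hTile
    have hTfin : T.Finite := Set.toFinite T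
    set TF := hTfin.toFinset with hTFdef
    set F := TF.filter (fun f => ∃ v : Fin n, v ∈ Set.range f ∧ (v : ℕ) < m1) with hFdef
    have hlowind : ∀ x : Fin n, (x : ℕ) < m1 → ∀ y : Fin n, (y : ℕ) < m1 → ¬ G.Adj x y := by
      intro x hx y hy hadj
      rw [hGdef] at hadj
      exact hadj.2 (Or.inl ⟨hx, hy⟩)
    have hcopy_low : ∀ f ∈ TF,
        (Finset.univ.filter (fun v : Fin n => v ∈ Set.range f ∧ (v : ℕ) < m1)).card ≤ ω := by
      intro f hf
      have hfc := hcopies f (hTfin.mem_toFinset.mp hf)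
      have himg : Finset.univ.filter (fun v : Fin n => v ∈ Set.range f ∧ (v : ℕ) < m1)
          = (Finset.univ.filter (fun u => f u ∈
              Finset.univ.filter (fun v : Fin n => (v : ℕ) < m1))).image f := by
        ext v
        simp only [Finset.mem_filter, Finset.mem_univ, true_and, Finset.mem_image, Set.mem_range]
        constructor
        · rintro ⟨⟨u, rfl⟩, hv⟩
          exact ⟨u, hv, rfl⟩
        · rintro ⟨u, hu, rfl⟩
          exact ⟨⟨u, rfl⟩, hu⟩
      rw [himg]
      refine le_trans Finset.card_image_le ?_
      refine copy_preimage_card_le (le_of_lt hσω) hfc.2 _ ?_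
      intro x hx y hy
      exact hlowind x (by simpa using hx) y (by simpa using hy)
    set UncS := {v : Fin n | ∀ f ∈ T, v ∉ Set.range f} with hUdef
    have hUfin : UncS.Finite := Set.toFinite _
    have hUcard : hUfin.toFinset.card ≤ E := by
      rw [← Set.ncard_eq_toFinset_card _ hUfin]
      exact hunc
    have hLcard : (Finset.univ.filter (fun v : Fin n => 0 ≤ (v : ℕ) ∧ (v : ℕ) < m1)).card = m1 := by
      rw [card_filter_interval 0 m1 hm1n]
      omega
    have hLsub : Finset.univ.filter (fun v : Fin n => 0 ≤ (v : ℕ) ∧ (v : ℕ) < m1) ⊆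
        hUfin.toFinset ∪ F.biUnion (fun f => Finset.univ.filter
          (fun v : Fin n => v ∈ Set.range f ∧ (v : ℕ) < m1)) := by
      intro v hv
      have hvm : (v : ℕ) < m1 := (Finset.mem_filter.mp hv).2.2
      by_cases hvU : v ∈ UncS
      · exact Finset.mem_union_left _ (hUfin.mem_toFinset.mpr hvU)
      · have hex : ∃ f ∈ T, v ∈ Set.range f := by
          by_contra hcon
          push_neg at hcon
          rw [hUdef] at hvU
          exact hvU (fun f hf => hcon f hf)
        obtain ⟨f, hfT, hvf⟩ := hex
        refine Finset.mem_union_right _ (Finset.mem_biUnion.mpr ⟨f, ?_, ?_⟩)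
        · rw [hFdef]
          exact Finset.mem_filter.mpr ⟨hTfin.mem_toFinset.mpr hfT, ⟨v, hvf, hvm⟩⟩
        · exact Finset.mem_filter.mpr ⟨Finset.mem_univ _, hvf, hvm⟩
    have hA : m1 ≤ E + F.card * ω := by
      have h1 := Finset.card_le_card hLsub
      have h2 := Finset.card_union_le hUfin.toFinset (F.biUnion (fun f =>
        Finset.univ.filter (fun v : Fin n => v ∈ Set.range f ∧ (v : ℕ) < m1)))
      have h3 := Finset.card_biUnion_le (s := F) (t := fun f =>
        Finset.univ.filter (fun v : Fin n => v ∈ Set.range f ∧ (v : ℕ) < m1))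
      have h4 : ∑ f ∈ F, (Finset.univ.filter
          (fun v : Fin n => v ∈ Set.range f ∧ (v : ℕ) < m1)).card ≤ F.card * ω := by
        refine le_trans (Finset.sum_le_card_nsmul _ _ ω ?_) (by rw [smul_eq_mul])
        intro f hf
        exact hcopy_low f (Finset.mem_of_mem_filter f (by rw [hFdef] at hf; exact hf))
      omega
    have hkey : ∀ f ∈ F, σ ≤ (Finset.univ.filter
        (fun v : Fin n => v ∈ Set.range f ∧ B4 ≤ (v : ℕ))).card := by
      intro f hf
      have hf' := hf
      rw [hFdef] at hf'
      obtain ⟨hfTF, v0, hv0r, hv0m⟩ := Finset.mem_filter.mp hf'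
      obtain ⟨u0, hu0⟩ := hv0r
      have hfc := hcopies f (hTfin.mem_toFinset.mp hfTF)
      have hlow : ((f u0 : Fin n) : ℕ) < m1 := by rw [hu0]; exact hv0m
      set NB := Finset.univ.filter
        (fun u : Σ i : Fin (q + 2), Fin (if (i : ℕ) = 0 then σ else ω) => ¬ u.1 = u0.1)
        with hNBdef
      have hNBcard : σ + (q + 1) * ω ≤ NB.card + ω := by
        have hsub : (Finset.univ : Finset (Σ i : Fin (q + 2),
            Fin (if (i : ℕ) = 0 then σ else ω))) ⊆
            NB ∪ Finset.univ.filter (fun u => u.1 = u0.1) := by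
          intro u _
          by_cases h : u.1 = u0.1
          · exact Finset.mem_union_right _ (Finset.mem_filter.mpr ⟨Finset.mem_univ _, h⟩)
          · refine Finset.mem_union_left _ ?_
            rw [hNBdef]
            exact Finset.mem_filter.mpr ⟨Finset.mem_univ _, h⟩
        have h1 := Finset.card_le_card hsub
        have h2 := Finset.card_union_le NB (Finset.univ.filter
          (fun u : Σ i : Fin (q + 2), Fin (if (i : ℕ) = 0 then σ else ω) => u.1 = u0.1))
        have h3 := fiber_card_le (le_of_lt hσω) u0.1
        have h4 : (Finset.univ : Finset (Σ i : Fin (q + 2),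
            Fin (if (i : ℕ) = 0 then σ else ω))).card = σ + (q + 1) * ω := by
          rw [Finset.card_univ, card_bottle]
        omega
      have hadjf : ∀ u ∈ NB, (m1 ≤ ((f u : Fin n) : ℕ) ∧ ((f u : Fin n) : ℕ) < B2)
          ∨ B4 ≤ ((f u : Fin n) : ℕ) := by
        intro u hu
        have hne : u0.1 ≠ u.1 := by
          intro h
          exact (Finset.mem_filter.mp hu).2 h.symm
        have hadj : G.Adj (f u0) (f u) := hfc.2 ((bottle_adj u0 u).2 hne)
        rw [hGdef] at hadj
        exact (adj_L (f u0) (f u) hlow hm2 h24).1 hadj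
      have hNBc : (NB.filter (fun u => ((f u : Fin n) : ℕ) < B2)).card ≤ q * ω := by
        have hsub2 : NB.filter (fun u => ((f u : Fin n) : ℕ) < B2) ⊆
            (Finset.range q).biUnion (fun j => Finset.univ.filter (fun u => f u ∈
              Finset.univ.filter (fun v : Fin n =>
                m1 + j * cw ≤ (v : ℕ) ∧ (v : ℕ) < m1 + (j + 1) * cw))) := by
          intro u hu
          obtain ⟨hu1, hu2⟩ := Finset.mem_filter.mp hu
          have hC : m1 ≤ ((f u : Fin n) : ℕ) := by
            rcases hadjf u hu1 with h | h
            · exact h.1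
            · omega
          have hjq : (((f u : Fin n) : ℕ) - m1) / cw < q :=
            (Nat.div_lt_iff_lt_mul hcw0).2 (by omega)
          have hlo : (((f u : Fin n) : ℕ) - m1) / cw * cw ≤ ((f u : Fin n) : ℕ) - m1 :=
            Nat.div_mul_le_self _ _
          have hhi : ((f u : Fin n) : ℕ) - m1 < ((((f u : Fin n) : ℕ) - m1) / cw + 1) * cw :=
            nat_lt_div_succ _ _ hcw0
          refine Finset.mem_biUnion.mpr ⟨(((f u : Fin n) : ℕ) - m1) / cw,
            Finset.mem_range.mpr hjq, ?_⟩
          simp only [Finset.mem_filter, Finset.mem_univ, true_and]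
          omega
        refine le_trans (Finset.card_le_card hsub2) (le_trans Finset.card_biUnion_le ?_)
        refine le_trans (Finset.sum_le_card_nsmul _ _ ω ?_) ?_
        · intro j hj
          have hjq : j < q := Finset.mem_range.mp hj
          have hjcw : (j + 1) * cw ≤ q * cw := Nat.mul_le_mul_right _ (by omega)
          refine copy_preimage_card_le (le_of_lt hσω) hfc.2 _ ?_
          intro x hx y hy hadj
          rw [hGdef] at hadj
          obtain ⟨hne, hnb⟩ := hadj
          simp only [Finset.mem_filter, Finset.mem_univ, true_and] at hx hy
          apply hnb
          refine Or.inr (Or.inr (Or.inr ⟨by omega, by omega, by omega, by omega, ?_⟩))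
          have hdx : ((x : ℕ) - m1) / cw = j := Nat.div_eq_of_lt_le (by omega) (by omega)
          have hdy : ((y : ℕ) - m1) / cw = j := Nat.div_eq_of_lt_le (by omega) (by omega)
          rw [hdx, hdy]
        · rw [Finset.card_range, smul_eq_mul]
      have hNBp : σ ≤ (NB.filter (fun u => B4 ≤ ((f u : Fin n) : ℕ))).card := by
        have hsub3 : NB ⊆ NB.filter (fun u => ((f u : Fin n) : ℕ) < B2) ∪
            NB.filter (fun u => B4 ≤ ((f u : Fin n) : ℕ)) := by
          intro u hu
          rcases hadjf u hu with h | h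
          · exact Finset.mem_union_left _ (Finset.mem_filter.mpr ⟨hu, h.2⟩)
          · exact Finset.mem_union_right _ (Finset.mem_filter.mpr ⟨hu, h⟩)
        have h0 := Finset.card_le_card hsub3
        have h1 := Finset.card_union_le (NB.filter (fun u => ((f u : Fin n) : ℕ) < B2))
          (NB.filter (fun u => B4 ≤ ((f u : Fin n) : ℕ)))
        have hbr : (q + 1) * ω = q * ω + ω := by ring
        omega
      have himg2 : (NB.filter (fun u => B4 ≤ ((f u : Fin n) : ℕ))).image f ⊆
          Finset.univ.filter (fun v : Fin n => v ∈ Set.range f ∧ B4 ≤ (v : ℕ)) := by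
        intro v hv
        obtain ⟨u, hu, rfl⟩ := Finset.mem_image.mp hv
        exact Finset.mem_filter.mpr ⟨Finset.mem_univ _, ⟨u, rfl⟩, (Finset.mem_filter.mp hu).2⟩
      calc σ ≤ (NB.filter (fun u => B4 ≤ ((f u : Fin n) : ℕ))).card := hNBp
        _ = ((NB.filter (fun u => B4 ≤ ((f u : Fin n) : ℕ))).image f).card :=
            (Finset.card_image_of_injective _ hfc.1).symm
        _ ≤ _ := Finset.card_le_card himg2
    have hdisjP : ∀ f ∈ F, ∀ g ∈ F, f ≠ g → Disjoint
        (Finset.univ.filter (fun v : Fin n => v ∈ Set.range f ∧ B4 ≤ (v : ℕ)))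
        (Finset.univ.filter (fun v : Fin n => v ∈ Set.range g ∧ B4 ≤ (v : ℕ))) := by
      intro f hf g hg hne
      have hfT : f ∈ T := hTfin.mem_toFinset.mp
        (Finset.mem_of_mem_filter f (by rw [hFdef] at hf; exact hf))
      have hgT : g ∈ T := hTfin.mem_toFinset.mp
        (Finset.mem_of_mem_filter g (by rw [hFdef] at hg; exact hg))
      have hdr := hdisj hfT hgT hne
      rw [Finset.disjoint_left]
      intro v hvf hvg
      exact Set.disjoint_left.mp hdr (Finset.mem_filter.mp hvf).2.1 (Finset.mem_filter.mp hvg).2.1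
    have hB : F.card * σ ≤ p := by
      have h1 : ∑ f ∈ F, (Finset.univ.filter
          (fun v : Fin n => v ∈ Set.range f ∧ B4 ≤ (v : ℕ))).card
          = (F.biUnion (fun f => Finset.univ.filter
            (fun v : Fin n => v ∈ Set.range f ∧ B4 ≤ (v : ℕ)))).card :=
        (Finset.card_biUnion hdisjP).symm
      have h2 : F.biUnion (fun f => Finset.univ.filter
          (fun v : Fin n => v ∈ Set.range f ∧ B4 ≤ (v : ℕ)))
          ⊆ Finset.univ.filter (fun v : Fin n => B4 ≤ (v : ℕ) ∧ (v : ℕ) < n) := by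
        intro v hv
        obtain ⟨f, hf, hvf⟩ := Finset.mem_biUnion.mp hv
        exact Finset.mem_filter.mpr ⟨Finset.mem_univ _, (Finset.mem_filter.mp hvf).2.2, v.isLt⟩
      have h3 : (Finset.univ.filter
          (fun v : Fin n => B4 ≤ (v : ℕ) ∧ (v : ℕ) < n)).card = n - B4 :=
        card_filter_interval B4 n le_rfl
      have h4 : F.card • σ ≤ ∑ f ∈ F, (Finset.univ.filter
          (fun v : Fin n => v ∈ Set.range f ∧ B4 ≤ (v : ℕ))).card :=
        Finset.card_nsmul_le_sum _ _ _ hkey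
      have h5 := Finset.card_le_card h2
      rw [smul_eq_mul] at h4
      omega
    have hbr1 : σ * m1 = σ * k + σ * ((q + 2) * b) * E := by rw [hm1def]; ring
    have hbr2 : σ * ((q + 2) * b) * E = σ * ((q + 2) * (b * E)) := by ring
    have hbr3 : (q + 2) * (b * E) ≤ σ * ((q + 2) * (b * E)) := Nat.le_mul_of_pos_left _ hσ
    have hbr4 : (q + 2) * (b * E) = q * (b * E) + 2 * (b * E) := by ring
    have hbr5 : b * E = σ * E + (q + 1) * (ω * E) := by rw [hbdef]; ring
    have hbr6 : (q + 1) * (ω * E) = q * (ω * E) + ω * E := by ring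
    have hbr7 : ω ≤ ω * E := by
      have := Nat.mul_le_mul_left ω hE1
      simpa using this
    have hbr8 : ω * p = ω * cl + (q + 1) * (ω * E) := by rw [hpdef]; ring
    have hC1 : σ * m1 ≤ σ * (E + F.card * ω) := Nat.mul_le_mul_left σ hA
    have hC2 : σ * (E + F.card * ω) = σ * E + ω * (F.card * σ) := by ring
    have hC3 : ω * (F.card * σ) ≤ ω * p := Nat.mul_le_mul_left ω hB
    omega
end

section
/- Let η > 0 be fixed and let H be a graph with χ(H) =: r. Let h := |H|, σ := σ(H) and ω := (h − σ)/(r − 1). Then (for all sufficiently large n for which the quantities below are integers) there exists a graph G on n vertices whose degree sequence d₁ ≤ … ≤ d_n satisfies d_i = (1 − ω/h − (r−1)η)·n for all i ≤ (ω/h + (r−1)η)·n and d_i ≥ (1 − ω/h + η)·n for all i > (ω/h + (r−1)η)·n, but such that G does not contain an H-tiling covering all but at most ηn vertices. (Note (1 − ω/h)n = (1 − 1/χ_cr(H))n.) -/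
open SimpleGraph

lemma card_filter_fin_val {n : ℕ} (q : ℕ → Prop) [DecidablePred q] :
    (Finset.univ.filter (fun v : Fin n => q v.val)).card
      = ((Finset.range n).filter q).card := by
  rw [← Finset.card_image_of_injective _ Fin.val_injective]
  congr 1
  ext x
  simp only [Finset.mem_image, Finset.mem_filter, Finset.mem_range, Finset.mem_univ, true_and]
  constructor
  · rintro ⟨v, hq, rfl⟩; exact ⟨v.isLt, hq⟩
  · rintro ⟨hx, hq⟩; exact ⟨⟨x, hx⟩, hq, rfl⟩


set_option maxHeartbeats 1000000 in
/-- Proposition 2.4: one cannot have significantly more than `ωn/h`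
vertices of degree below `(1 - 1/χ_cr(H))n`.  Here `s = (ω/h + (r-1)η)n`,
`dlow = (1 - ω/h - (r-1)η)n` and `E = ηn` (all integers by assumption). -/
theorem extremal_example_small_degrees
    {α : Type*} [Fintype α] (H : SimpleGraph α) (r : ℕ)
    (hr : 2 ≤ r) (hchi : H.chromaticNumber = (r : ℕ∞))
    (σ ω h : ℝ) (hσ : σ = (minClassSize H r : ℝ)) (hh : h = (Fintype.card α : ℝ))
    (hω : ω = (h - σ) / ((r : ℝ) - 1))
    (η : ℝ) (hη : 0 < η) :
    ∃ n₀ : ℕ, ∀ n : ℕ, n₀ ≤ n →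
      ∀ s dlow E : ℕ,
        (s : ℝ) = (ω / h + ((r : ℝ) - 1) * η) * n →
        (dlow : ℝ) = (1 - ω / h - ((r : ℝ) - 1) * η) * n →
        (E : ℝ) = η * n →
        ∃ G : SimpleGraph (Fin n),
          (∃ e : Fin n ≃ Fin n,
            (∀ i j : Fin n, i ≤ j → degN G (e i) ≤ degN G (e j)) ∧
            (∀ i : Fin n, (i : ℕ) + 1 ≤ s → degN G (e i) = dlow) ∧
            (∀ i : Fin n, s < (i : ℕ) + 1 →
              (1 - ω / h + η) * n ≤ (degN G (e i) : ℝ))) ∧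
          ¬ HasTilingAllBut H G E := by
  classical
  -- ## coloring facts
  have hcol : H.Colorable r := chromaticNumber_le_iff_colorable.mp (le_of_eq hchi)
  obtain ⟨c0⟩ := hcol
  have claimB : ∀ (c : H.Coloring (Fin r)) (i : Fin r), {v | c v = i}.Nonempty := by
    intro c i
    by_contra hemp
    rw [Set.not_nonempty_iff_eq_empty] at hemp
    have hne : ∀ v, c v ≠ i := by
      intro v hv
      have hmem : v ∈ {v | c v = i} := hv
      rw [hemp] at hmem
      exact hmem
    obtain ⟨m, rfl⟩ : ∃ m, r = m + 1 := ⟨r - 1, by omega⟩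
    have hcol' : H.Colorable m := by
      refine ⟨Coloring.mk (fun v => (Fin.exists_succAbove_eq (hne v)).choose) ?_⟩
      intro u v huv hcc
      have hu := (Fin.exists_succAbove_eq (hne u)).choose_spec
      have hv := (Fin.exists_succAbove_eq (hne v)).choose_spec
      exact c.valid huv (by rw [← hu, ← hv]; exact congrArg _ hcc)
    have hle := hcol'.chromaticNumber_le
    rw [hchi] at hle
    have : (m + 1 : ℕ) ≤ m := by exact_mod_cast hle
    omega
  set sg := minClassSize H r with hsgdef
  have claimA : ∀ (c : H.Coloring (Fin r)) (i : Fin r), sg ≤ {v | c v = i}.ncard :=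
    fun c i => Nat.sInf_le ⟨c, i, rfl⟩
  have hsg1 : 1 ≤ sg := by
    have hmem : sg ∈ {s : ℕ | ∃ (c : H.Coloring (Fin r)) (i : Fin r), s = {v | c v = i}.ncard} :=
      Nat.sInf_mem ⟨_, c0, ⟨0, by omega⟩, rfl⟩
    obtain ⟨c, i, hci⟩ := hmem
    rw [hci]
    exact (Set.ncard_pos (Set.toFinite _)).mpr (claimB c i)
  have claimC : r * sg ≤ Fintype.card α := by
    have hcard : ∀ i : Fin r, sg ≤ (Finset.univ.filter (fun v => c0 v = i)).card := by
      intro i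
      have h1 := claimA c0 i
      have h2 : {v | c0 v = i} = ↑(Finset.univ.filter (fun v => c0 v = i)) := by
        ext v; simp
      rwa [h2, Set.ncard_coe_finset] at h1
    calc r * sg = ∑ _i : Fin r, sg := by simp [mul_comm]
      _ ≤ ∑ i : Fin r, (Finset.univ.filter (fun v => c0 v = i)).card :=
          Finset.sum_le_sum (fun i _ => hcard i)
      _ = Fintype.card α := by
          rw [← Finset.card_univ]
          exact (Finset.card_eq_sum_card_fiberwise (fun v _ => Finset.mem_univ _)).symm
  -- ## real facts
  have hr2R : (2:ℝ) ≤ r := by exact_mod_cast hr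
  have hsgR : (1:ℝ) ≤ σ := by rw [hσ]; exact_mod_cast hsg1
  have hrsR : (r:ℝ) * σ ≤ h := by rw [hσ, hh]; exact_mod_cast claimC
  have hσh : σ < h := by nlinarith
  have hhpos : (0:ℝ) < h := by linarith
  have hr1 : (0:ℝ) < (r:ℝ) - 1 := by linarith
  have hωeq : ω * ((r:ℝ) - 1) = h - σ := by rw [hω]; field_simp
  have hωσ : σ ≤ ω := by nlinarith
  have hωpos : (0:ℝ) < ω := by linarith
  have hrω : h ≤ (r:ℝ) * ω := by nlinarith
  refine ⟨1, ?_⟩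
  intro n hn1 s dlow E hsE hdlowE hEE
  have hnR : (1:ℝ) ≤ (n:ℝ) := by exact_mod_cast hn1
  have hn0 : (0:ℝ) < n := by linarith
  set W := ω / h with hWdef
  have hWh : W * h = ω := by rw [hWdef]; field_simp
  have hWpos : (0:ℝ) < W := div_pos hωpos hhpos
  have hrW : 1 ≤ (r:ℝ) * W := by
    rw [hWdef, ← mul_div_assoc, le_div_iff₀ hhpos]
    linarith
  have hWσ : ((r:ℝ) - 1) * (W * h) = h - σ := by rw [hWh]; linarith [hωeq]
  have h3 : 0 ≤ 1 - W - ((r:ℝ)-1) * η := by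
    have h0 : 0 ≤ (1 - W - ((r:ℝ)-1)*η) * n := by rw [← hdlowE]; positivity
    by_contra hcon
    push_neg at hcon
    nlinarith
  have hηW : η ≤ W := by
    have h4 : ((r:ℝ)-1) * η ≤ ((r:ℝ)-1) * W := by linarith
    exact le_of_mul_le_mul_left h4 hr1
  have hη1 : η < 1 := by
    nlinarith [mul_nonneg (by linarith : (0:ℝ) ≤ (r:ℝ)-2) hη.le]
  -- ## nat facts
  have hsdlow : s + dlow = n := by
    have hc : ((s + dlow : ℕ) : ℝ) = (n:ℝ) := by push_cast; rw [hsE, hdlowE]; ring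
    exact_mod_cast hc
  have hEn : E < n := by
    have hc : (E:ℝ) < (n:ℝ) := by
      rw [hEE]
      have := mul_lt_mul_of_pos_right hη1 hn0
      linarith
    exact_mod_cast hc
  have hrE : r * E ≤ s := by
    have hc : ((r * E : ℕ):ℝ) ≤ (s:ℝ) := by
      push_cast
      rw [hEE, hsE]
      have := mul_nonneg (sub_nonneg.mpr hηW) hn0.le
      linarith
    exact_mod_cast hc
  set cap := s - r * E with hcapdef
  have hcapR : (cap:ℝ) = (W - η) * n := by
    rw [hcapdef]
    rw [Nat.cast_sub hrE]
    push_cast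
    rw [hsE, hEE]
    ring
  have hcaps : cap ≤ s := by omega
  have hdcap : dlow ≤ (r-1) * cap := by
    have hc : (dlow:ℝ) ≤ (((r-1) * cap : ℕ):ℝ) := by
      push_cast [Nat.cast_sub (by omega : 1 ≤ r)]
      rw [hdlowE, hcapR]
      linarith [mul_nonneg (sub_nonneg.mpr hrW) hn0.le]
    exact_mod_cast hc
  set t := dlow - (r-2) * cap with htdef
  have hhtlt : Fintype.card α * t < sg * (n - E) := by
    rcases le_or_gt dlow ((r-2) * cap) with hle | hlt
    · have ht0 : t = 0 := by omega
      rw [ht0, Nat.mul_zero]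
      exact Nat.mul_pos (by omega) (by omega)
    · have htR : (t:ℝ) = (dlow:ℝ) - ((r:ℝ)-2) * cap := by
        rw [htdef, Nat.cast_sub hlt.le]
        push_cast [Nat.cast_sub hr]
        ring
      have hgoalR : ((Fintype.card α * t : ℕ):ℝ) < ((sg * (n - E) : ℕ):ℝ) := by
        push_cast [Nat.cast_sub hEn.le]
        rw [htR, hdlowE, hcapR, hEE, ← hh, ← hσ]
        have key : h * ((1 - W - ((r:ℝ)-1)*η)*(n:ℝ) - (((r:ℝ)-2) * ((W - η)*(n:ℝ)))) =
            (σ - h*η) * n := by linear_combination (-(n:ℝ)) * hWσ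
        linarith [mul_pos (mul_pos hη hn0) (sub_pos.mpr hσh), key]
      exact_mod_cast hgoalR
  -- ## the graph
  set P : ℕ → ℕ := fun x => if x < s then 0 else min (r-1) ((x - s)/cap + 1) with hP
  set G : SimpleGraph (Fin n) :=
    { Adj := fun u v => P u.val ≠ P v.val
      symm := ⟨fun u v hne => hne.symm⟩
      loopless := ⟨fun u hne => hne rfl⟩ }
    with hG
  have hAdj : ∀ u v : Fin n, G.Adj u v ↔ P u.val ≠ P v.val := fun u v => Iff.rfl
  have hrpos : 1 ≤ r - 1 := by omega
  have hPle : ∀ x : ℕ, P x ≤ r - 1 := by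
    intro x
    simp only [hP]
    split_ifs with hx
    · omega
    · exact min_le_left _ _
  have hP0 : ∀ x : ℕ, P x = 0 ↔ x < s := by
    intro x
    simp only [hP]
    split_ifs with hx
    · simp [hx]
    · have h1 : 1 ≤ min (r-1) ((x - s)/cap + 1) := le_min (by omega) (Nat.succ_le_succ (Nat.zero_le _))
      constructor
      · intro hc; omega
      · intro hc; omega
  have hPmono : ∀ x y : ℕ, x ≤ y → P x ≤ P y := by
    intro x y hxy
    simp only [hP]
    split_ifs with h1 h2 h2
    · exact le_refl 0
    · exact Nat.zero_le _
    · omega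
    · exact min_le_min (le_refl _)
        (Nat.add_le_add_right (Nat.div_le_div_right (Nat.sub_le_sub_right hxy s)) 1)
  have hFs0 : ((Finset.range n).filter (fun x => P x = 0)).card = s := by
    have hset : (Finset.range n).filter (fun x => P x = 0) = Finset.range s := by
      ext x
      simp only [Finset.mem_filter, Finset.mem_range, hP0]
      omega
    rw [hset, Finset.card_range]
  have hfib : ∀ j, 1 ≤ j → j ≤ r - 1 →
      (Finset.range n).filter (fun x => P x = j)
        = Finset.Ico (s + min dlow ((j-1)*cap)) (s + min dlow (j*cap)) := by
    intro j hj1 hjr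
    obtain ⟨j', rfl⟩ : ∃ j', j = j' + 1 := ⟨j - 1, by omega⟩
    have hj'c : (j' + 1) * cap = j' * cap + cap := by ring
    simp only [Nat.add_sub_cancel]
    rcases Nat.eq_zero_or_pos cap with hc0 | hcpos
    · have hd0 : dlow = 0 := by
        have := hdcap
        rw [hc0, Nat.mul_zero] at this
        omega
      ext x
      simp only [Finset.mem_filter, Finset.mem_range, Finset.mem_Ico, hP]
      constructor
      · rintro ⟨hx, hPx⟩
        exfalso
        rw [if_pos (by omega)] at hPx
        omega
      · intro hx
        exfalso
        simp only [hd0] at hx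
        omega
    · ext x
      simp only [Finset.mem_filter, Finset.mem_range, Finset.mem_Ico, hP]
      constructor
      · rintro ⟨hx, hPx⟩
        have hxs : ¬ x < s := by
          intro hxs
          rw [if_pos hxs] at hPx
          omega
        rw [if_neg hxs] at hPx
        push_neg at hxs
        have hql : j' * cap ≤ x - s := by
          have h5 := min_le_right (r-1) ((x - s)/cap + 1)
          exact (Nat.le_div_iff_mul_le hcpos).mp (by omega)
        refine ⟨by omega, ?_⟩
        rcases Nat.lt_or_ge (j'+1) (r-1) with hlt' | hge'
        · have hq2 : (x-s)/cap < j'+1 := by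
            by_contra hq2
            push_neg at hq2
            have h6 := le_min (show j'+2 ≤ r-1 by omega)
              (show j'+2 ≤ (x-s)/cap + 1 by omega)
            omega
          have hxu : x - s < (j'+1)*cap := (Nat.div_lt_iff_lt_mul hcpos).mp hq2
          omega
        · have he : (j'+1) * cap = (r-1) * cap := by rw [show j'+1 = r-1 by omega]
          omega
      · rintro ⟨hlo, hhi⟩
        have hxn : x < n := by omega
        refine ⟨hxn, ?_⟩
        have hxs : ¬ x < s := by omega
        rw [if_neg hxs]
        have hA : j' * cap ≤ x - s := by omega
        have hB : x - s < (j'+1) * cap := by omega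
        have hq1 : j' ≤ (x-s)/cap := (Nat.le_div_iff_mul_le hcpos).mpr hA
        have hq2 : (x-s)/cap < j'+1 := (Nat.div_lt_iff_lt_mul hcpos).mpr hB
        have hqe : (x-s)/cap = j' := by omega
        rw [hqe]
        omega
  have hcapmul : ∀ j : ℕ, 1 ≤ j → j * cap = (j-1)*cap + cap := by
    intro j hj
    obtain ⟨j', rfl⟩ : ∃ j', j = j' + 1 := ⟨j - 1, by omega⟩
    simp only [Nat.add_sub_cancel]
    ring
  have hFsmid : ∀ j, 1 ≤ j → j ≤ r - 1 →
      ((Finset.range n).filter (fun x => P x = j)).card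
        = min dlow (j*cap) - min dlow ((j-1)*cap) := by
    intro j h1 h2
    rw [hfib j h1 h2, Nat.card_Ico]
    omega
  have hFscap : ∀ j, 1 ≤ j → j ≤ r - 1 →
      ((Finset.range n).filter (fun x => P x = j)).card ≤ cap := by
    intro j h1 h2
    rw [hFsmid j h1 h2]
    have := hcapmul j h1
    omega
  have hFsmono : ∀ a b : ℕ, a ≤ b → b ≤ r - 1 →
      ((Finset.range n).filter (fun x => P x = b)).card
        ≤ ((Finset.range n).filter (fun x => P x = a)).card := by
    intro a b hab hbr
    rcases Nat.eq_zero_or_pos a with ha0 | ha1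
    · subst ha0
      rw [hFs0]
      rcases Nat.eq_zero_or_pos b with hb0 | hb1
      · subst hb0; rw [hFs0]
      · exact le_trans (hFscap b hb1 hbr) hcaps
    · have hb1 : 1 ≤ b := le_trans ha1 hab
      rw [hFsmid a ha1 (le_trans hab hbr), hFsmid b hb1 hbr]
      have h1 := hcapmul a ha1
      have h2 := hcapmul b hb1
      have h3 : (a-1)*cap ≤ (b-1)*cap := Nat.mul_le_mul (by omega) (le_refl cap)
      omega
  have hdeg : ∀ v : Fin n,
      degN G v = n - ((Finset.range n).filter (fun x => P x = P v.val)).card := by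
    intro v
    have hnb : G.neighborSet v
        = ↑(Finset.univ.filter (fun u : Fin n => ¬ P u.val = P v.val)) := by
      ext u
      simp only [mem_neighborSet, Finset.coe_filter, Finset.mem_univ, true_and,
        Set.mem_setOf_eq, hAdj]
      exact ne_comm
    rw [degN, hnb, Set.ncard_coe_finset]
    have hsplit := Finset.card_filter_add_card_filter_not
      (s := (Finset.univ : Finset (Fin n))) (p := fun u : Fin n => P u.val = P v.val)
    rw [card_filter_fin_val (fun x => P x = P v.val)] at hsplit
    have hcu : (Finset.univ : Finset (Fin n)).card = n := by simp
    omega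
  refine ⟨G, ⟨Equiv.refl _, ?_, ?_, ?_⟩, ?_⟩
  · intro i j hij
    simp only [Equiv.refl_apply]
    rw [hdeg i, hdeg j]
    have hm := hFsmono (P i.val) (P j.val) (hPmono _ _ (Fin.le_def.mp hij)) (hPle _)
    omega
  · intro i hi
    simp only [Equiv.refl_apply]
    rw [hdeg i]
    rw [show P i.val = 0 from (hP0 _).mpr (by omega), hFs0]
    omega
  · intro i hi
    simp only [Equiv.refl_apply]
    have hh0 := hP0 i.val
    have hP1 : 1 ≤ P i.val := by omega
    have hle := hFscap (P i.val) hP1 (hPle _)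
    have hdge : n - cap ≤ degN G i := by rw [hdeg i]; omega
    have hcast : ((n - cap : ℕ):ℝ) ≤ (degN G i : ℝ) := by exact_mod_cast hdge
    rw [Nat.cast_sub (le_trans hcaps (by omega : s ≤ n)), hcapR] at hcast
    push_cast at hcast ⊢
    linarith
  · rintro ⟨T, ⟨hcopy, hdisj⟩, hcover⟩
    have hα : Nonempty α := by
      have h0 : 0 < Fintype.card α :=
        lt_of_lt_of_le (lt_of_lt_of_le (by omega) (Nat.mul_le_mul hr hsg1)) claimC
      exact Fintype.card_pos_iff.mp h0
    have hTfin : T.Finite := by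
      have hinj : Set.InjOn (fun f => Set.range f) T := by
        intro f hf g hg hfg
        by_contra hne
        have hd : Disjoint (Set.range f) (Set.range g) := hdisj hf hg hne
        have hfg' : Set.range f = Set.range g := hfg
        rw [hfg', disjoint_self] at hd
        exact (Set.range_nonempty g).ne_empty hd
      exact Set.Finite.of_finite_image (Set.toFinite _) hinj
    set Tf := hTfin.toFinset with hTfdef
    set Cov := Tf.biUnion (fun f => Finset.univ.image f) with hCovdef
    have hCovcard : Cov.card ≤ Fintype.card α * Tf.card := by
      calc Cov.card ≤ ∑ f ∈ Tf, (Finset.univ.image f).card := Finset.card_biUnion_le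
        _ ≤ ∑ _f ∈ Tf, Fintype.card α := Finset.sum_le_sum (fun f _ =>
            le_trans Finset.card_image_le (by simp))
        _ = Tf.card * Fintype.card α := by rw [Finset.sum_const, smul_eq_mul]
        _ = Fintype.card α * Tf.card := Nat.mul_comm _ _
    have hUn : n ≤ E + Cov.card := by
      have hsub : ((Finset.univ \ Cov : Finset (Fin n)) : Set (Fin n))
          ⊆ {v : Fin n | ∀ f ∈ T, v ∉ Set.range f} := by
        intro v hv
        simp only [Finset.coe_sdiff, Finset.coe_univ, Set.mem_diff, Set.mem_univ, true_and,
          Finset.mem_coe, hCovdef, Finset.mem_biUnion, not_exists, not_and] at hv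
        intro f hf hvf
        obtain ⟨a, ha⟩ := hvf
        exact hv f (hTfin.mem_toFinset.mpr hf) (Finset.mem_image.mpr ⟨a, Finset.mem_univ a, ha⟩)
      have h1 : (Finset.univ \ Cov).card ≤ E := by
        calc (Finset.univ \ Cov).card
            = ((Finset.univ \ Cov : Finset (Fin n)) : Set (Fin n)).ncard :=
              (Set.ncard_coe_finset _).symm
          _ ≤ {v : Fin n | ∀ f ∈ T, v ∉ Set.range f}.ncard :=
              Set.ncard_le_ncard hsub (Set.toFinite _)
          _ ≤ E := hcover
      have h2 : Cov.card ≤ n := le_trans (Finset.card_le_univ _) (by simp)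
      have h3 := Finset.card_sdiff_of_subset (Finset.subset_univ Cov)
      have h4 : (Finset.univ : Finset (Fin n)).card = n := by simp
      omega
    have htile : ∀ f ∈ Tf, sg ≤ (Finset.univ.filter (fun a : α => P (f a).val = r - 1)).card := by
      intro f hf
      obtain ⟨finj, fadj⟩ := hcopy f (hTfin.mem_toFinset.mp hf)
      have hlt : ∀ a : α, P (f a).val < r := fun a => by have := hPle (f a).val; omega
      have hvalid : ∀ {u v : α}, H.Adj u v →
          (⟨P (f u).val, hlt u⟩ : Fin r) ≠ ⟨P (f v).val, hlt v⟩ := by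
        intro u v huv hcc
        exact ((hAdj (f u) (f v)).mp (fadj huv)) (congrArg Fin.val hcc)
      have hA := claimA (Coloring.mk (fun a => (⟨P (f a).val, hlt a⟩ : Fin r)) hvalid)
        ⟨r - 1, by omega⟩
      have hset : {v : α | (Coloring.mk (fun a => (⟨P (f a).val, hlt a⟩ : Fin r)) hvalid) v
          = ⟨r - 1, by omega⟩}
          = ↑(Finset.univ.filter (fun a : α => P (f a).val = r - 1)) := by
        ext a
        simp only [Set.mem_setOf_eq, Finset.coe_filter, Finset.mem_univ, true_and]
        exact ⟨fun hq => congrArg Fin.val hq, fun hq => Fin.ext hq⟩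
      rwa [hset, Set.ncard_coe_finset] at hA
    have hdisjIm : ∀ f ∈ Tf, ∀ g ∈ Tf, f ≠ g →
        Disjoint ((Finset.univ.filter (fun a : α => P (f a).val = r-1)).image f)
                 ((Finset.univ.filter (fun a : α => P (g a).val = r-1)).image g) := by
      intro f hf g hg hfg
      have hd := hdisj (hTfin.mem_toFinset.mp hf) (hTfin.mem_toFinset.mp hg) hfg
      rw [Finset.disjoint_left]
      intro x hxf hxg
      obtain ⟨a, _, rfl⟩ := Finset.mem_image.mp hxf
      obtain ⟨b, _, hba⟩ := Finset.mem_image.mp hxg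
      exact Set.disjoint_left.mp hd ⟨a, rfl⟩ ⟨b, hba⟩
    have hlastcard : (Finset.univ.filter (fun v : Fin n => P v.val = r - 1)).card ≤ t := by
      rw [card_filter_fin_val (fun x => P x = r - 1)]
      rw [hFsmid (r-1) (by omega) (le_refl _)]
      have h1 := hcapmul (r-1) (by omega)
      have h2 : r - 1 - 1 = r - 2 := by omega
      rw [h2] at h1
      rw [h2]
      omega
    have hsum : sg * Tf.card ≤ t := by
      have hsub : Tf.biUnion
            (fun f => (Finset.univ.filter (fun a : α => P (f a).val = r-1)).image f)
          ⊆ Finset.univ.filter (fun v : Fin n => P v.val = r - 1) := by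
        intro x hx
        obtain ⟨f, hf, hxf⟩ := Finset.mem_biUnion.mp hx
        obtain ⟨a, ha, rfl⟩ := Finset.mem_image.mp hxf
        simp only [Finset.mem_filter, Finset.mem_univ, true_and]
        exact (Finset.mem_filter.mp ha).2
      calc sg * Tf.card = ∑ _f ∈ Tf, sg := by rw [Finset.sum_const, smul_eq_mul, Nat.mul_comm]
        _ ≤ ∑ f ∈ Tf, ((Finset.univ.filter (fun a : α => P (f a).val = r-1)).image f).card :=
            Finset.sum_le_sum (fun f hf => by
              rw [Finset.card_image_of_injective _ (hcopy f (hTfin.mem_toFinset.mp hf)).1]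
              exact htile f hf)
        _ = (Tf.biUnion
            (fun f => (Finset.univ.filter (fun a : α => P (f a).val = r-1)).image f)).card :=
            (Finset.card_biUnion hdisjIm).symm
        _ ≤ (Finset.univ.filter (fun v : Fin n => P v.val = r - 1)).card :=
            Finset.card_le_card hsub
        _ ≤ t := hlastcard
    have hfin1 : sg * n ≤ sg * E + sg * (Fintype.card α * Tf.card) := by
      calc sg * n ≤ sg * (E + Cov.card) := Nat.mul_le_mul_left _ hUn
        _ = sg * E + sg * Cov.card := Nat.mul_add _ _ _
        _ ≤ sg * E + sg * (Fintype.card α * Tf.card) :=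
            Nat.add_le_add_left (Nat.mul_le_mul_left _ hCovcard) _
    have hfin2 : sg * (Fintype.card α * Tf.card) ≤ Fintype.card α * t := by
      calc sg * (Fintype.card α * Tf.card) = Fintype.card α * (sg * Tf.card) := by ring
        _ ≤ Fintype.card α * t := Nat.mul_le_mul_left _ hsum
    have hfin3 : sg * (n - E) + sg * E = sg * n := by
      rw [← Nat.mul_add, Nat.sub_add_cancel hEn.le]
    omega
end

section
/- Let H be a graph with χ(H) =: r ≥ 3 and hcf_χ(H) = 1, and let h := |H|. Fix an integer p with 1 ≤ p ≤ r − 1. For each optimal colouring c of H let x_{c,1} ≤ … ≤ x_{c,r} denote the sizes of its colour classes, let D_c be the multiset [x_{c,1}, …, x_{c,r}], let z_p := C(r,p) be the number of p-element sub-multisets (p-subsets) A_{p,c,1}, …, A_{p,c,z_p} contained in D_c (indexed by the p-element subsets of the r positions), and set S_{p,c,J} := Σ_{x ∈ A_{p,c,J}} x for each 1 ≤ J ≤ z_p. Then there exist a collection of non-negative integers {a_{p,c,i} : c an optimal colouring of H, 1 ≤ i ≤ z_p} and ā ∈ ℕ such that a_{p,c,i} ≤ ā for all c and all 1 ≤ i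 ≤ z_p, and Σ_c Σ_{i=1}^{z_p} a_{p,c,i}·S_{p,c,i} ≡ 1 (mod h). -/
open SimpleGraph

open Finset in
private lemma finset_bezout {ι : Type*} [DecidableEq ι] (s : Finset ι) (f : ι → ℤ) :
    ∃ c : ι → ℤ, ∑ i ∈ s, c i * f i = s.gcd f := by
  induction s using Finset.induction_on with
  | empty => exact ⟨fun _ => 0, by simp⟩
  | insert a s ha ih =>
    obtain ⟨c, hc⟩ := ih
    refine ⟨fun i => if i = a then Int.gcdA (f a) (s.gcd f)
      else Int.gcdB (f a) (s.gcd f) * c i, ?_⟩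
    rw [Finset.sum_insert ha, Finset.gcd_insert]
    dsimp only
    rw [if_pos rfl]
    have : ∑ i ∈ s, (if i = a then Int.gcdA (f a) (s.gcd f)
        else Int.gcdB (f a) (s.gcd f) * c i) * f i
        = Int.gcdB (f a) (s.gcd f) * ∑ i ∈ s, c i * f i := by
      rw [Finset.mul_sum]
      refine Finset.sum_congr rfl fun i hi => ?_
      rw [if_neg (by rintro rfl; exact ha hi)]
      ring
    rw [this, hc]
    have h2 := Int.gcd_eq_gcd_ab (f a) (s.gcd f)
    have h3 : GCDMonoid.gcd (f a) (s.gcd f) = (Int.gcd (f a) (s.gcd f) : ℤ) := by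
      exact (Int.coe_gcd _ _).symm
    rw [h3, h2]; ring


/-- Theorem 5.2, case `r ≥ 3`: if `χ(H) = r ≥ 3` and `hcf_χ(H) = 1`,
there are bounded non-negative coefficients, indexed by optimal colourings `c` of `H`
together with `p`-element subsets `J` of the `r` colour-class positions, such that the
corresponding combination of the sums `S = Σ_{j ∈ J} |c⁻¹(j)|` is `≡ 1 (mod h)`. -/
theorem bezout_colour_classes
    {α : Type*} [Fintype α] (H : SimpleGraph α) (r : ℕ)
    (hr : 3 ≤ r) (hchi : H.chromaticNumber = (r : ℕ∞)) (hhcf : HcfChiOne H r)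
    (p : ℕ) (hp1 : 1 ≤ p) (hpr : p ≤ r - 1) :
    ∃ (a : H.Coloring (Fin r) → Finset (Fin r) → ℕ) (abar : ℕ),
      (∀ (c : H.Coloring (Fin r)) (J : Finset (Fin r)), a c J ≤ abar) ∧
      (∑ᶠ c : H.Coloring (Fin r),
          ∑ J ∈ Finset.powersetCard p (Finset.univ : Finset (Fin r)),
            a c J * ∑ j ∈ J, {v | c v = j}.ncard) ≡ 1 [MOD Fintype.card α] := by
  classical
  have hfin : Finite (H.Coloring (Fin r)) :=
    Finite.of_injective (fun c => (c : α → Fin r)) DFunLike.coe_injective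
  haveI := Fintype.ofFinite (H.Coloring (Fin r))
  set h := Fintype.card α with hh
  -- α is nonempty
  have h2 := hhcf 2 (by norm_num)
  push_neg at h2
  obtain ⟨c0, i0, j0, hnd⟩ := h2
  have hα : h ≠ 0 := by
    intro h0
    haveI : IsEmpty α := Fintype.card_eq_zero_iff.mp h0
    apply hnd
    have he : ∀ k : Fin r, {v : α | c0 v = k} = ∅ := fun k => Set.eq_empty_of_isEmpty _
    rw [he i0, he j0]
    simp
  haveI : NeZero h := ⟨hα⟩
  set S : H.Coloring (Fin r) × Finset (Fin r) → ℕ :=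
    fun x => ∑ j ∈ x.2, {v | x.1 v = j}.ncard with hSdef
  set F : H.Coloring (Fin r) × Finset (Fin r) → ℤ := fun x => (S x : ℤ) with hFdef
  set s : Finset (H.Coloring (Fin r) × Finset (Fin r)) :=
    Finset.univ ×ˢ Finset.powersetCard p Finset.univ with hs
  set g0 : ℤ := s.gcd F with hg0
  set N : ℕ := Int.gcd (h : ℤ) g0 with hNdef
  have hNh : (N : ℤ) ∣ (h : ℤ) := Int.gcd_dvd_left _ _
  have hNg : (N : ℤ) ∣ g0 := Int.gcd_dvd_right _ _
  -- N divides every difference of colour class sizes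
  have hNdvd : ∀ (c : H.Coloring (Fin r)) (i j : Fin r),
      (N : ℤ) ∣ (({v | c v = i}.ncard : ℤ) - ({v | c v = j}.ncard : ℤ)) := by
    intro c i j
    by_cases hij : i = j
    · simp [hij]
    · have hcard : p - 1 ≤ (Finset.univ \ {i, j} : Finset (Fin r)).card := by
        rw [Finset.card_sdiff_of_subset (Finset.subset_univ _), Finset.card_univ, Fintype.card_fin,
          Finset.card_insert_of_notMem (by simp [hij]), Finset.card_singleton]
        omega
      obtain ⟨K, hKsub, hKcard⟩ := Finset.exists_subset_card_eq hcard
      have hiK : i ∉ K := fun hx => by simpa using (hKsub hx)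
      have hjK : j ∉ K := fun hx => by simpa using (hKsub hx)
      have hmem : ∀ k : Fin r, k ∉ K → (c, insert k K) ∈ s := by
        intro k hk
        rw [hs, Finset.mem_product]
        refine ⟨Finset.mem_univ _, ?_⟩
        rw [Finset.mem_powersetCard]
        exact ⟨Finset.subset_univ _, by rw [Finset.card_insert_of_notMem hk, hKcard]; omega⟩
      have d1 : (N : ℤ) ∣ F (c, insert i K) := hNg.trans (Finset.gcd_dvd (hmem i hiK))
      have d2 : (N : ℤ) ∣ F (c, insert j K) := hNg.trans (Finset.gcd_dvd (hmem j hjK))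
      have hdiff : F (c, insert i K) - F (c, insert j K)
          = (({v | c v = i}.ncard : ℤ) - ({v | c v = j}.ncard : ℤ)) := by
        simp only [hFdef, hSdef]
        push_cast
        rw [Finset.sum_insert hiK, Finset.sum_insert hjK]
        ring
      rw [← hdiff]
      exact dvd_sub d1 d2
  -- N = 1
  have hN1 : N = 1 := by
    rcases Nat.lt_or_ge N 2 with hN2 | hN2
    · interval_cases N
      · exfalso
        have := Int.gcd_eq_zero_iff.mp hNdef.symm
        exact hα (by exact_mod_cast this.1)
      · rfl
    · exact absurd hNdvd (hhcf N hN2)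
  -- Bezout
  obtain ⟨cf, hcfeq⟩ := finset_bezout s F
  have hbez : (h : ℤ) * Int.gcdA (h : ℤ) g0 + g0 * Int.gcdB (h : ℤ) g0 = 1 := by
    have := Int.gcd_eq_gcd_ab (h : ℤ) g0
    rw [← hNdef, hN1] at this
    exact_mod_cast this.symm
  set v : ℤ := Int.gcdB (h : ℤ) g0 with hv
  set b : H.Coloring (Fin r) × Finset (Fin r) → ℤ := fun x => cf x * v with hb
  have hbsum : ∑ x ∈ s, b x * F x = 1 - (h : ℤ) * Int.gcdA (h : ℤ) g0 := by
    have : ∑ x ∈ s, b x * F x = (∑ x ∈ s, cf x * F x) * v := by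
      rw [Finset.sum_mul]
      exact Finset.sum_congr rfl fun x _ => by rw [hb]; ring
    rw [this, hcfeq, ← hg0]
    linarith [hbez]
  refine ⟨fun c J => ((b (c, J) : ZMod h)).val, h,
    fun c J => (ZMod.val_lt _).le, ?_⟩
  have key : ((∑ᶠ c : H.Coloring (Fin r),
      ∑ J ∈ Finset.powersetCard p (Finset.univ : Finset (Fin r)),
        ((b (c, J) : ZMod h)).val * ∑ j ∈ J, {v | c v = j}.ncard : ℕ) : ZMod h) = 1 := by
    rw [finsum_eq_sum_of_fintype]
    push_cast
    have hval : ∀ x : ZMod h, ((x.val : ℕ) : ZMod h) = x := ZMod.natCast_rightInverse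
    calc (∑ c : H.Coloring (Fin r), ∑ J ∈ Finset.powersetCard p Finset.univ,
            (((((b (c, J) : ZMod h)).val : ℕ)) : ZMod h) * ((∑ j ∈ J, ({v | c v = j}.ncard : ZMod h))))
        = ((∑ x ∈ s, b x * F x : ℤ) : ZMod h) := by
          push_cast
          rw [hs, Finset.sum_product]
          refine Finset.sum_congr rfl fun c _ => Finset.sum_congr rfl fun J _ => ?_
          rw [hval]
          simp [hFdef, hSdef]
      _ = 1 := by
          rw [hbsum]
          push_cast
          simp [ZMod.natCast_self]
  calc (∑ᶠ c : H.Coloring (Fin r),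
      ∑ J ∈ Finset.powersetCard p (Finset.univ : Finset (Fin r)),
        ((b (c, J) : ZMod h)).val * ∑ j ∈ J, {v | c v = j}.ncard)
      ≡ 1 [MOD h] := (ZMod.natCast_eq_natCast_iff _ _ _).mp (by rw [key]; simp)
end
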